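/- For q ∈ ℂ with |q| < 1, integers h ∈ ℤ, k ≥ 1, an odd positive integer d, a d-periodic function χ : ℕ → ℂ, a natural number x, and n ∈ ℕ, the two expressions for E_{n,χ,q}^{(h,k)}(x) agree: ∑_{a_1,…,a_k=0}^{d−1} (∏ χ(a_i)) (−1)^{∑ a_j} q^{∑_j (h−j) a_j} · (2^k/(1−q)^n) ∑_{l=0}^n C(n,l)(−1)^l q^{l(x+∑ a_j)} / (−q^{d(h−k+l)} : q^d)_k = 2^k [d]_q^n ∑_{m=0}^∞ qbinom(m+k−1, m; q^d) (−1)^m q^{d(h−k)m} ∑_{a_1,…,a_k=0}^{d−1} (∏ χ(a_i)) (−1)^{∑ a_j} q^{∑_j (h−j) a_j} [m + (x + ∑_j a_j)/d]_{q^d}^n, provided h − k + l ≥ 0 for all 0 ≤ l ≤ n so all denominators are nonzero (e.g., h ≥ k). -/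

import Mathlib

open Filter Finset

/-- Abel summation: `HasAbelSum a S` means `∑ a(m) r^m → S` as `r → 1⁻`. -/
def HasAbelSum (a : ℕ → ℂ) (S : ℂ) : Prop :=
  Tendsto (fun r : ℝ => ∑' m : ℕ, a m * (r : ℂ) ^ m) (nhdsWithin 1 (Set.Iio 1)) (nhds S)

/-- The Gaussian binomial coefficient `qbinom q n k = ∏_{i<k}(1−q^{n−i}) / ∏_{i<k}(1−q^{i+1})`. -/
noncomputable def qbinom (q : ℂ) (n k : ℕ) : ℂ :=
  (∏ i ∈ Finset.range k, (1 - q ^ (n - i))) / ∏ i ∈ Finset.range k, (1 - q ^ (i + 1))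

lemma qbinom_denom_ne {Q : ℂ} (hQ : ‖Q‖ < 1) (k : ℕ) :
    ∏ i ∈ Finset.range k, (1 - Q ^ (i + 1)) ≠ 0 := by
  refine Finset.prod_ne_zero_iff.mpr fun i _ h => ?_
  have h1 : Q ^ (i+1) = 1 := by linear_combination -h
  have h2 : ‖Q‖ ^ (i+1) < 1 :=
    pow_lt_one₀ (norm_nonneg Q) hQ (Nat.succ_ne_zero i)
  rw [← norm_pow, h1, norm_one] at h2
  exact absurd h2 (lt_irrefl 1)

lemma qbinom_zero (Q : ℂ) (n : ℕ) : qbinom Q n 0 = 1 := by simp [qbinom]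

lemma qbinom_diag {Q : ℂ} (hQ : ‖Q‖ < 1) (m : ℕ) : qbinom Q m m = 1 := by
  unfold qbinom
  rw [show (∏ i ∈ Finset.range m, (1 - Q ^ (m - i)))
      = ∏ i ∈ Finset.range m, (1 - Q ^ (i + 1)) from ?_, div_self (qbinom_denom_ne hQ m)]
  rw [← Finset.prod_range_reflect (fun i => (1 - Q ^ (i + 1))) m]
  exact Finset.prod_congr rfl fun i hi => by
    rw [Finset.mem_range] at hi; congr 2; omega

lemma qbinom_pascal {Q : ℂ} (hQ : ‖Q‖ < 1) (n j : ℕ) (hjn : j ≤ n) :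
    qbinom Q (n+1) (j+1) = qbinom Q n (j+1) + Q ^ (n - j) * qbinom Q n j := by
  unfold qbinom
  have h1 : ∏ i ∈ Finset.range (j+1), (1 - Q ^ (n+1-i))
      = (∏ i ∈ Finset.range j, (1 - Q ^ (n-i))) * (1 - Q^(n+1)) := by
    rw [Finset.prod_range_succ']
    congr 1
    exact Finset.prod_congr rfl fun i hi => by congr 2; omega
  have h2 : ∏ i ∈ Finset.range (j+1), (1 - Q ^ (n-i))
      = (∏ i ∈ Finset.range j, (1 - Q ^ (n-i))) * (1 - Q^(n-j)) := Finset.prod_range_succ _ _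
  have h3 : ∏ i ∈ Finset.range (j+1), (1 - Q ^ (i+1))
      = (∏ i ∈ Finset.range j, (1 - Q ^ (i+1))) * (1 - Q^(j+1)) := Finset.prod_range_succ _ _
  have key : Q ^ (n-j) * Q ^ (j+1) = Q^(n+1) := by rw [← pow_add]; congr 1; omega
  have hD : ∏ i ∈ Finset.range j, (1 - Q ^ (i+1)) ≠ 0 := qbinom_denom_ne hQ j
  have hf : (1 - Q^(j+1)) ≠ 0 := by
    have := qbinom_denom_ne hQ (j+1); rw [h3] at this; exact right_ne_zero_of_mul this
  rw [h1, h2, h3]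
  rw [← key]
  field_simp
  ring

lemma qbinom_bound {Q : ℂ} (hQ : ‖Q‖ < 1) (k : ℕ) :
    ∃ M : ℝ, 1 ≤ M ∧ ∀ m, ‖qbinom Q (m + k) m‖ ≤ M := by
  induction k with
  | zero =>
    exact ⟨1, le_refl 1, fun m => by rw [Nat.add_zero, qbinom_diag hQ, norm_one]⟩
  | succ k ih =>
    obtain ⟨M, hM1, hM⟩ := ih
    have hq1 : ‖Q‖ ^ (k+1) < 1 :=
      pow_lt_one₀ (norm_nonneg Q) hQ (Nat.succ_ne_zero k)
    have hpos : 0 < 1 - ‖Q‖ ^ (k+1) := by linarith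
    refine ⟨M / (1 - ‖Q‖ ^ (k+1)), ?_, ?_⟩
    · rw [le_div_iff₀ hpos]; nlinarith [pow_nonneg (norm_nonneg Q) (k+1)]
    · intro m
      induction m with
      | zero => rw [Nat.zero_add, qbinom_zero, norm_one, le_div_iff₀ hpos]
                nlinarith [pow_nonneg (norm_nonneg Q) (k+1)]
      | succ m ihm =>
        have hp := qbinom_pascal hQ (m + k + 1) m (by omega)
        rw [show m + k + 1 - m = k + 1 from by omega] at hp
        rw [show m + 1 + (k+1) = m + k + 1 + 1 from by omega, hp]
        calc ‖qbinom Q (m+k+1) (m+1) + Q^(k+1) * qbinom Q (m+k+1) m‖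
            ≤ ‖qbinom Q (m+k+1) (m+1)‖ + ‖Q^(k+1) * qbinom Q (m+k+1) m‖ :=
              norm_add_le _ _
          _ ≤ M + ‖Q‖ ^ (k+1) * (M / (1 - ‖Q‖ ^ (k+1))) := by
              rw [norm_mul, norm_pow]
              gcongr
              · exact le_trans (by rw [show m + k + 1 = (m+1) + k from by omega]) (hM (m+1))
              · exact le_trans (by rw [show m + k + 1 = m + (k+1) from by omega]) ihm
          _ = M / (1 - ‖Q‖ ^ (k+1)) := by field_simp; ring

lemma qbinom_hasSum {Q z : ℂ} (hQ : ‖Q‖ < 1) (hz : ‖z‖ < 1) (k : ℕ) :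
    HasSum (fun m => qbinom Q (m + k) m * z ^ m)
      (∏ j ∈ Finset.range (k+1), (1 - z * Q ^ j))⁻¹ := by
  induction k with
  | zero =>
    have h := hasSum_geometric_of_norm_lt_one (ξ := z) hz
    have h2 : (∏ j ∈ Finset.range 1, (1 - z * Q ^ j))⁻¹ = (1 - z)⁻¹ := by
      simp
    rw [h2]
    exact h.congr_fun fun m => by rw [Nat.add_zero, qbinom_diag hQ, one_mul]
  | succ k ih =>
    set T : ℂ := (∏ j ∈ Finset.range (k+1), (1 - z * Q ^ j))⁻¹ with hT
    obtain ⟨M, hM1, hM⟩ := qbinom_bound hQ (k+1)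
    set b : ℕ → ℂ := fun m => qbinom Q (m + (k+1)) m * z ^ m with hb
    have hsumm : Summable b := by
      refine Summable.of_norm_bounded (g := fun m => M * ‖z‖ ^ m)
        ((summable_geometric_of_lt_one (norm_nonneg z) hz).mul_left M) fun m => ?_
      rw [hb]
      simp only [norm_mul, norm_pow]
      exact mul_le_mul_of_nonneg_right (hM m) (pow_nonneg (norm_nonneg z) m)
    have hB := hsumm.hasSum
    set B := ∑' m, b m with hBdef
    have hrec : ∀ m, b (m+1) = qbinom Q ((m+1)+k) (m+1) * z^(m+1) + Q^(k+1) * z * b m := by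
      intro m
      have hp := qbinom_pascal hQ (m + k + 1) m (by omega)
      rw [show m + k + 1 - m = k + 1 from by omega] at hp
      simp only [hb]
      rw [show m + 1 + (k+1) = m + k + 1 + 1 from by omega, hp,
        show m + 1 + k = m + k + 1 from by omega, show m + (k+1) = m + k + 1 from by omega]
      ring
    -- sum of shifted c-part
    have hc : HasSum (fun m => qbinom Q (m + k) m * z ^ m) T := ih
    have hc1 : HasSum (fun m => qbinom Q ((m+1)+k) (m+1) * z^(m+1)) (T - 1) := by
      have h0 : (∑ i ∈ Finset.range 1, qbinom Q (i + k) i * z ^ i) = 1 := by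
        simp [qbinom_zero]
      have := (hasSum_nat_add_iff' (f := fun m => qbinom Q (m + k) m * z ^ m) 1).mpr hc
      rw [h0] at this
      exact this
    have hb1 : HasSum (fun m => b (m+1)) (T - 1 + Q^(k+1) * z * B) := by
      exact ((hc1.add ((hB.mul_left (Q^(k+1) * z)))).congr_fun fun m => hrec m)
    have hb1' : HasSum (fun m => b (m+1)) (B - 1) := by
      have h0 : (∑ i ∈ Finset.range 1, b i) = 1 := by simp [hb, qbinom_zero]
      have := (hasSum_nat_add_iff' (f := b) 1).mpr hB
      rw [h0] at this
      exact this
    have hkey : B - 1 = T - 1 + Q^(k+1) * z * B := hb1'.unique hb1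
    have hne : (1 : ℂ) - z * Q^(k+1) ≠ 0 := by
      intro hcon
      have h1 : z * Q ^ (k+1) = 1 := by linear_combination -hcon
      have h2 : ‖z * Q ^ (k+1)‖ < 1 := by
        rw [norm_mul, norm_pow]
        calc ‖z‖ * ‖Q‖ ^ (k+1) ≤ ‖z‖ * 1 := by
              gcongr
              exact pow_le_one₀ (norm_nonneg Q) hQ.le
          _ < 1 := by rwa [mul_one]
      rw [h1, norm_one] at h2
      exact absurd h2 (lt_irrefl 1)
    have hBval : B = T * (1 - z * Q^(k+1))⁻¹ := by
      field_simp
      linear_combination hkey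
    have hfin : (∏ j ∈ Finset.range (k+1+1), (1 - z * Q ^ j))⁻¹ = T * (1 - z * Q^(k+1))⁻¹ := by
      rw [Finset.prod_range_succ, mul_inv, hT]
    rw [hfin, ← hBval]
    exact hB

theorem higher_order_hk_q_euler_two_forms (q : ℂ) (hq : ‖q‖ < 1)
    (d : ℕ) (hd : Odd d) (hd0 : 0 < d) (k h : ℕ) (hk : 1 ≤ k) (hh : k ≤ h)
    (χ : ℕ → ℂ) (hχ : ∀ m, χ (m + d) = χ m) (x n : ℕ) :
    HasAbelSum
      (fun m => 2 ^ k * ((1 - q ^ d) / (1 - q)) ^ n *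
        qbinom (q ^ d) (m + k - 1) m * (-1 : ℂ) ^ m * q ^ (d * (h - k) * m) *
          ∑ a : Fin k → Fin d,
            (∏ i, χ (a i)) * (-1 : ℂ) ^ (∑ j, (a j : ℕ)) *
              q ^ (∑ j : Fin k, (h - ((j : ℕ) + 1)) * (a j : ℕ)) *
                ((1 - q ^ (d * m + x + ∑ j, (a j : ℕ))) / (1 - q ^ d)) ^ n)
      (∑ a : Fin k → Fin d,
        (∏ i, χ (a i)) * (-1 : ℂ) ^ (∑ j, (a j : ℕ)) *
          q ^ (∑ j : Fin k, (h - ((j : ℕ) + 1)) * (a j : ℕ)) *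
            ((2 ^ k / (1 - q) ^ n) *
              ∑ l ∈ Finset.range (n + 1),
                (n.choose l : ℂ) * (-1 : ℂ) ^ l * q ^ (l * (x + ∑ j, (a j : ℕ))) /
                  ∏ j ∈ Finset.range k, (1 + q ^ (d * (h - k + l)) * (q ^ d) ^ j))) := by
  obtain ⟨e, rfl⟩ : ∃ e, h = k + e := ⟨h - k, by omega⟩
  simp only [Nat.add_sub_cancel_left]
  have habsQ : ‖q ^ d‖ < 1 := by
    rw [norm_pow]; exact pow_lt_one₀ (norm_nonneg q) hq hd0.ne'
  have h1q : (1 : ℂ) - q ≠ 0 := by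
    intro hcon
    have h1 : q = 1 := by linear_combination -hcon
    rw [h1] at hq; simp at hq
  have h1Q : (1 : ℂ) - q ^ d ≠ 0 := by
    intro hcon
    have h1 : q ^ d = 1 := by linear_combination -hcon
    rw [h1, norm_one] at habsQ; exact absurd habsQ (lt_irrefl 1)
  have hone : ∀ E : ℕ, (1 : ℂ) + q ^ E ≠ 0 := by
    intro E
    rcases Nat.eq_zero_or_pos E with hE | hE
    · subst hE; norm_num
    · intro hcon
      have h1 : q ^ E = -1 := by linear_combination hcon
      have h2 : ‖q‖ ^ E < 1 := pow_lt_one₀ (norm_nonneg q) hq hE.ne'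
      rw [← norm_pow, h1] at h2; simp at h2
  have hprod_ne : ∀ l : ℕ,
      (∏ j ∈ Finset.range k, (1 + q ^ (d * (e + l)) * (q ^ d) ^ j)) ≠ 0 := by
    intro l
    refine Finset.prod_ne_zero_iff.mpr fun j _ => ?_
    rw [← pow_mul, ← pow_add]
    exact hone _
  -- limit of complex coordinate
  have hr1 : Tendsto (fun r : ℝ => (r : ℂ)) (nhdsWithin 1 (Set.Iio 1)) (nhds 1) :=
    (Complex.continuous_ofReal.tendsto 1).mono_left nhdsWithin_le_nhds
  -- key pointwise HasSum
  have hkey : ∀ r : ℝ, 0 < r → r < 1 →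
      HasSum (fun m => (2 ^ k * ((1 - q ^ d) / (1 - q)) ^ n *
        qbinom (q ^ d) (m + k - 1) m * (-1 : ℂ) ^ m * q ^ (d * e * m) *
          ∑ a : Fin k → Fin d,
            (∏ i, χ (a i)) * (-1 : ℂ) ^ (∑ j, (a j : ℕ)) *
              q ^ (∑ j : Fin k, (k + e - ((j : ℕ) + 1)) * (a j : ℕ)) *
                ((1 - q ^ (d * m + x + ∑ j, (a j : ℕ))) / (1 - q ^ d)) ^ n) * (r : ℂ) ^ m)
        (∑ a : Fin k → Fin d, ∑ l ∈ Finset.range (n + 1),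
          ((∏ i, χ (a i)) * (-1 : ℂ) ^ (∑ j, (a j : ℕ)) *
              q ^ (∑ j : Fin k, (k + e - ((j : ℕ) + 1)) * (a j : ℕ)) *
            (2 ^ k / (1 - q) ^ n) *
            ((n.choose l : ℂ) * (-1 : ℂ) ^ l * q ^ (l * (x + ∑ j, (a j : ℕ))))) *
          (∏ j ∈ Finset.range k, (1 + q ^ (d * (e + l)) * (r : ℂ) * (q ^ d) ^ j))⁻¹) := by
    intro r hr0 hr1'
    have hz : ∀ l : ℕ, ‖-(q ^ (d * (e + l)) * (r : ℂ))‖ < 1 := by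
      intro l
      rw [norm_neg, norm_mul, norm_pow, Complex.norm_real, Real.norm_eq_abs, abs_of_pos hr0]
      calc ‖q‖ ^ (d * (e + l)) * r ≤ 1 * r := by
            gcongr
            exact pow_le_one₀ (norm_nonneg q) hq.le
        _ < 1 := by rwa [one_mul]
    have base : ∀ (a : Fin k → Fin d), ∀ l, l ∈ Finset.range (n + 1) →
        HasSum (fun m =>
          ((∏ i, χ (a i)) * (-1 : ℂ) ^ (∑ j, (a j : ℕ)) *
              q ^ (∑ j : Fin k, (k + e - ((j : ℕ) + 1)) * (a j : ℕ)) *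
            (2 ^ k / (1 - q) ^ n) *
            ((n.choose l : ℂ) * (-1 : ℂ) ^ l * q ^ (l * (x + ∑ j, (a j : ℕ))))) *
          (qbinom (q ^ d) (m + (k - 1)) m * (-(q ^ (d * (e + l)) * (r : ℂ))) ^ m))
          (((∏ i, χ (a i)) * (-1 : ℂ) ^ (∑ j, (a j : ℕ)) *
              q ^ (∑ j : Fin k, (k + e - ((j : ℕ) + 1)) * (a j : ℕ)) *
            (2 ^ k / (1 - q) ^ n) *
            ((n.choose l : ℂ) * (-1 : ℂ) ^ l * q ^ (l * (x + ∑ j, (a j : ℕ))))) *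
          (∏ j ∈ Finset.range k, (1 + q ^ (d * (e + l)) * (r : ℂ) * (q ^ d) ^ j))⁻¹) := by
      intro a l _
      have hs := (qbinom_hasSum habsQ (hz l) (k - 1)).mul_left
        ((∏ i, χ (a i)) * (-1 : ℂ) ^ (∑ j, (a j : ℕ)) *
              q ^ (∑ j : Fin k, (k + e - ((j : ℕ) + 1)) * (a j : ℕ)) *
            (2 ^ k / (1 - q) ^ n) *
            ((n.choose l : ℂ) * (-1 : ℂ) ^ l * q ^ (l * (x + ∑ j, (a j : ℕ)))))
      rw [show k - 1 + 1 = k from by omega] at hs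
      rw [show (∏ j ∈ Finset.range k, (1 - -(q ^ (d * (e + l)) * (r : ℂ)) * (q ^ d) ^ j))
          = ∏ j ∈ Finset.range k, (1 + q ^ (d * (e + l)) * (r : ℂ) * (q ^ d) ^ j) from
        Finset.prod_congr rfl fun j _ => by ring] at hs
      exact hs
    have H := hasSum_sum (s := (Finset.univ : Finset (Fin k → Fin d)))
      (fun a _ => hasSum_sum (fun l hl => base a l hl))
    refine H.congr_fun fun m => ?_
    -- algebraic identity
    rw [show m + k - 1 = m + (k - 1) from by omega]
    rw [Finset.mul_sum, Finset.sum_mul]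
    refine Finset.sum_congr rfl fun a _ => ?_
    have hbin : ((1 : ℂ) - q ^ (d * m + x + ∑ j, (a j : ℕ))) ^ n
        = ∑ l ∈ Finset.range (n + 1),
            (-(q ^ (d * m + x + ∑ j, (a j : ℕ)))) ^ l * (n.choose l : ℂ) := by
      rw [show (1 : ℂ) - q ^ (d * m + x + ∑ j, (a j : ℕ))
          = -(q ^ (d * m + x + ∑ j, (a j : ℕ))) + 1 from by ring, add_pow]
      exact Finset.sum_congr rfl fun l _ => by rw [one_pow, mul_one]
    rw [div_pow (1 - q ^ (d * m + x + ∑ j, (a j : ℕ))), hbin, Finset.sum_div,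
      Finset.mul_sum, Finset.mul_sum, Finset.sum_mul]
    refine Finset.sum_congr rfl fun l _ => ?_
    have e1 : (q ^ (d * (e + l))) ^ m = q ^ (d * e * m) * q ^ (d * (l * m)) := by
      rw [← pow_mul, ← pow_add]; congr 1; ring
    have e2 : (q ^ (d * m + x + ∑ j, (a j : ℕ))) ^ l
        = q ^ (d * (l * m)) * q ^ (l * (x + ∑ j, (a j : ℕ))) := by
      rw [← pow_mul, ← pow_add]; congr 1; ring
    have e3 : (-(q ^ (d * (e + l)) * (r : ℂ))) ^ m
        = (-1 : ℂ) ^ m * ((q ^ (d * (e + l))) ^ m * (r : ℂ) ^ m) := by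
      rw [neg_pow, mul_pow]
    have e4 : (-q ^ (d * m + x + ∑ j, (a j : ℕ))) ^ l
        = (-1 : ℂ) ^ l * (q ^ (d * m + x + ∑ j, (a j : ℕ))) ^ l := neg_pow _ _
    rw [e3, e1, e4, e2, div_pow]
    linear_combination ((∏ i, χ (a i)) * (-1 : ℂ) ^ (∑ j, (a j : ℕ)) *
        q ^ (∑ j : Fin k, (k + e - ((j : ℕ) + 1)) * (a j : ℕ)) * (2 ^ k / (1 - q) ^ n) *
        ((n.choose l : ℂ) * (-1 : ℂ) ^ l * q ^ (l * (x + ∑ j, (a j : ℕ)))) *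
        (qbinom (q ^ d) (m + (k - 1)) m * ((-1 : ℂ) ^ m * (q ^ (d * e * m) * q ^ (d * (l * m)) *
        (r : ℂ) ^ m)))) * mul_inv_cancel₀ (pow_ne_zero n h1Q)
  have hfac : ∀ (E j : ℕ), Tendsto (fun r : ℝ => 1 + q ^ E * (r : ℂ) * (q ^ d) ^ j)
      (nhdsWithin 1 (Set.Iio 1)) (nhds (1 + q ^ E * (q ^ d) ^ j)) := by
    intro E j
    simpa using tendsto_const_nhds.add ((tendsto_const_nhds.mul hr1).mul tendsto_const_nhds)
  have hG : ∀ C : (Fin k → Fin d) → ℕ → ℂ,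
      Tendsto (fun r : ℝ => ∑ a : Fin k → Fin d, ∑ l ∈ Finset.range (n + 1),
        C a l * (∏ j ∈ Finset.range k, (1 + q ^ (d * (e + l)) * (r : ℂ) * (q ^ d) ^ j))⁻¹)
      (nhdsWithin 1 (Set.Iio 1))
      (nhds (∑ a : Fin k → Fin d, ∑ l ∈ Finset.range (n + 1),
        C a l * (∏ j ∈ Finset.range k, (1 + q ^ (d * (e + l)) * (q ^ d) ^ j))⁻¹)) := by
    intro C
    refine tendsto_finset_sum _ fun a _ => tendsto_finset_sum _ fun l _ => ?_
    exact tendsto_const_nhds.mul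
      ((tendsto_finset_prod _ fun j _ => hfac (d * (e + l)) j).inv₀ (hprod_ne l))
  have hSval : (∑ a : Fin k → Fin d,
        (∏ i, χ (a i)) * (-1 : ℂ) ^ (∑ j, (a j : ℕ)) *
          q ^ (∑ j : Fin k, (k + e - ((j : ℕ) + 1)) * (a j : ℕ)) *
            ((2 ^ k / (1 - q) ^ n) *
              ∑ l ∈ Finset.range (n + 1),
                (n.choose l : ℂ) * (-1 : ℂ) ^ l * q ^ (l * (x + ∑ j, (a j : ℕ))) /
                  ∏ j ∈ Finset.range k, (1 + q ^ (d * (e + l)) * (q ^ d) ^ j)))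
      = ∑ a : Fin k → Fin d, ∑ l ∈ Finset.range (n + 1),
          ((∏ i, χ (a i)) * (-1 : ℂ) ^ (∑ j, (a j : ℕ)) *
              q ^ (∑ j : Fin k, (k + e - ((j : ℕ) + 1)) * (a j : ℕ)) *
            (2 ^ k / (1 - q) ^ n) *
            ((n.choose l : ℂ) * (-1 : ℂ) ^ l * q ^ (l * (x + ∑ j, (a j : ℕ))))) *
          (∏ j ∈ Finset.range k, (1 + q ^ (d * (e + l)) * (q ^ d) ^ j))⁻¹ := by
    refine Finset.sum_congr rfl fun a _ => ?_
    rw [Finset.mul_sum, Finset.mul_sum]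
    refine Finset.sum_congr rfl fun l _ => ?_
    rw [div_eq_mul_inv]; ring
  unfold HasAbelSum
  rw [hSval]
  refine Tendsto.congr' ?_ (hG fun a l =>
    (∏ i, χ (a i)) * (-1 : ℂ) ^ (∑ j, (a j : ℕ)) *
        q ^ (∑ j : Fin k, (k + e - ((j : ℕ) + 1)) * (a j : ℕ)) *
      (2 ^ k / (1 - q) ^ n) *
      ((n.choose l : ℂ) * (-1 : ℂ) ^ l * q ^ (l * (x + ∑ j, (a j : ℕ)))))
  filter_upwards [Ioo_mem_nhdsLT_of_mem (Set.mem_Ioc.mpr ⟨one_pos, le_refl 1⟩)] with r hr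
  exact ((hkey r hr.1 hr.2).tsum_eq).symm
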